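/- Let H be Hermitian with spectrum in compact 𝓔 ⊂ ℝ, z ∉ 𝓔, δ = dist(z,𝓔), and E with ‖E‖₂ < δ. Then for all entries (i,j), |((H−zI)^{-1} − (H+E−zI)^{-1})(i,j)| ≤ ∑_{ĩ,j̃} |(H−zI)^{-1}(i,ĩ)|·|E(ĩ,j̃)|·|(H−zI)^{-1}(j̃,j)| + δ^{-2}‖E‖₂²/(δ − ‖E‖₂). -/

import Mathlib

open Matrix BigOperators Finset


lemma aux_entry_le {n : ℕ} (A : Matrix (Fin n) (Fin n) ℂ) (i j : Fin n) :
    ‖A i j‖ ≤ ‖Matrix.toEuclideanCLM (𝕜 := ℂ) A‖ := by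
  have h1 : (Matrix.toEuclideanCLM (𝕜 := ℂ) A) (EuclideanSpace.single j 1) i = A i j := by
    rw [← EuclideanSpace.toLp_single j (1:ℂ), Matrix.toEuclideanCLM_toLp]
    simp [Matrix.toLin'_apply, Matrix.mulVec_single]
  have h2 : ‖A i j‖ = ‖inner (𝕜 := ℂ) (EuclideanSpace.single i (1:ℂ))
      ((Matrix.toEuclideanCLM (𝕜 := ℂ) A) (EuclideanSpace.single j 1))‖ := by
    rw [EuclideanSpace.inner_single_left]; simp [h1]
  rw [h2]
  refine le_trans (norm_inner_le_norm _ _) ?_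
  have h3 : ‖EuclideanSpace.single i (1:ℂ)‖ = 1 := by rw [EuclideanSpace.norm_single, norm_one]
  have h4 : ‖(Matrix.toEuclideanCLM (𝕜 := ℂ) A) (EuclideanSpace.single j 1)‖ ≤
      ‖Matrix.toEuclideanCLM (𝕜 := ℂ) A‖ := by
    refine le_trans (ContinuousLinearMap.le_opNorm _ _) ?_
    rw [EuclideanSpace.norm_single, norm_one, mul_one]
  rw [h3, one_mul]; exact h4


lemma aux_resolvent_bound {n : ℕ} (H : Matrix (Fin n) (Fin n) ℂ) (hH : H.IsHermitian)
    (z : ℂ) (δ : ℝ) (hδ : 0 < δ)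
    (hdist : ∀ μ ∈ spectrum ℂ H, δ ≤ ‖μ - z‖) :
    IsUnit (H - z • (1 : Matrix (Fin n) (Fin n) ℂ)) ∧
    ‖Matrix.toEuclideanCLM (𝕜 := ℂ) (H - z • (1 : Matrix (Fin n) (Fin n) ℂ))⁻¹‖ ≤ δ⁻¹ := by
  set M : Matrix (Fin n) (Fin n) ℂ := H - z • 1 with hMdef
  have halg : M = H - algebraMap ℂ (Matrix (Fin n) (Fin n) ℂ) z := by
    rw [Algebra.algebraMap_eq_smul_one]
  have hMspec := (spectrum.sub_singleton_eq (R := ℂ) H z).symm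
  rw [← halg] at hMspec
  have hlow : ∀ μ ∈ spectrum ℂ M, δ ≤ ‖μ‖ := by
    intro μ hμ
    rw [hMspec] at hμ
    obtain ⟨x, hx, y, hy, rfl⟩ := Set.mem_sub.mp hμ
    rw [Set.mem_singleton_iff] at hy
    subst hy
    exact hdist x hx
  have h0 : (0 : ℂ) ∉ spectrum ℂ M := fun h => by
    have := hlow 0 h
    simp at this
    linarith
  have hu : IsUnit M := spectrum.isUnit_of_zero_notMem ℂ h0
  refine ⟨hu, ?_⟩
  obtain ⟨u, hu⟩ := hu
  -- normality of the inverse at the matrix level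
  have hstarM : star M = H - (starRingEnd ℂ z) • 1 := by
    rw [hMdef, star_sub, star_smul, star_one, Matrix.star_eq_conjTranspose, hH.eq]
    rfl
  have hcommM : Commute M (star M) := by
    rw [hstarM, hMdef]
    exact Commute.sub_left
      (Commute.sub_right (Commute.refl H) (((Commute.one_right H).smul_right _)))
      (Commute.sub_right ((Commute.one_left H).smul_left _)
        (((Commute.refl (1 : Matrix (Fin n) (Fin n) ℂ)).smul_left _).smul_right _))
  let su : (Matrix (Fin n) (Fin n) ℂ)ˣ :=
    ⟨star M, star ((u⁻¹ : _ˣ) : Matrix (Fin n) (Fin n) ℂ),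
      by rw [← StarMul.star_mul, ← hu, u.inv_mul, star_one],
      by rw [← StarMul.star_mul, ← hu, u.mul_inv, star_one]⟩
  have hcomm_u : Commute ((u : Matrix (Fin n) (Fin n) ℂ)) ((su : Matrix (Fin n) (Fin n) ℂ)) := by
    rw [hu]; exact hcommM
  have hcomm_inv : Commute ((u⁻¹ : _ˣ) : Matrix (Fin n) (Fin n) ℂ)
      (star ((u⁻¹ : _ˣ) : Matrix (Fin n) (Fin n) ℂ)) :=
    (hcomm_u.units_inv_left).units_inv_right
  -- move to continuous linear maps on Euclidean space
  set L := EuclideanSpace ℂ (Fin n) →L[ℂ] EuclideanSpace ℂ (Fin n) with hL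
  set φ := Matrix.toEuclideanCLM (𝕜 := ℂ) (n := Fin n) with hφ
  have hφmul_inv : φ (u : Matrix (Fin n) (Fin n) ℂ) * φ ((u⁻¹ : _ˣ) : Matrix (Fin n) (Fin n) ℂ) = 1 := by
    rw [← _root_.map_mul, u.mul_inv, _root_.map_one]
  have hφinv_mul : φ ((u⁻¹ : _ˣ) : Matrix (Fin n) (Fin n) ℂ) * φ (u : Matrix (Fin n) (Fin n) ℂ) = 1 := by
    rw [← _root_.map_mul, u.inv_mul, _root_.map_one]
  set v : Lˣ := ⟨φ (u : Matrix (Fin n) (Fin n) ℂ), φ ((u⁻¹ : _ˣ) : Matrix (Fin n) (Fin n) ℂ),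
    hφmul_inv, hφinv_mul⟩ with hv
  have hvinv : ((v⁻¹ : Lˣ) : L) = φ ((u⁻¹ : _ˣ) : Matrix (Fin n) (Fin n) ℂ) := rfl
  haveI : IsStarNormal ((v⁻¹ : Lˣ) : L) := by
    constructor
    show star ((v⁻¹ : Lˣ) : L) * ((v⁻¹ : Lˣ) : L) = ((v⁻¹ : Lˣ) : L) * star ((v⁻¹ : Lˣ) : L)
    rw [hvinv, ← map_star, ← _root_.map_mul, ← _root_.map_mul, ← hcomm_inv.eq]
  -- spectra agree under φ
  have hIsUnit : ∀ X : Matrix (Fin n) (Fin n) ℂ, IsUnit (φ X) ↔ IsUnit X := by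
    intro X
    constructor
    · intro h
      have h2 := h.map (Matrix.toEuclideanCLM (𝕜 := ℂ) (n := Fin n)).symm
      simpa using h2
    · exact fun h => h.map φ
  have hspec_eq : ∀ X : Matrix (Fin n) (Fin n) ℂ, spectrum ℂ (φ X) = spectrum ℂ X := by
    intro X
    ext μ
    simp only [spectrum.mem_iff, not_iff_not]
    have halgφ : algebraMap ℂ L μ = φ (algebraMap ℂ (Matrix (Fin n) (Fin n) ℂ) μ) := by
      rw [Algebra.algebraMap_eq_smul_one, Algebra.algebraMap_eq_smul_one, _root_.map_smul,
        _root_.map_one]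
    rw [halgφ, ← map_sub]
    exact hIsUnit _
  have hspecv : spectrum ℂ ((v⁻¹ : Lˣ) : L) = (spectrum ℂ M)⁻¹ := by
    rw [← spectrum.map_inv v]
    congr 1
    show spectrum ℂ (φ (u : Matrix (Fin n) (Fin n) ℂ)) = _
    rw [hspec_eq, hu]
  -- bound the spectral radius
  have hδinv : (0:ℝ) ≤ δ⁻¹ := by positivity
  have hbound : ∀ k ∈ spectrum ℂ ((v⁻¹ : Lˣ) : L), ‖k‖₊ ≤ (⟨δ⁻¹, hδinv⟩ : NNReal) := by
    intro k hk
    rw [hspecv, Set.mem_inv] at hk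
    have hle : δ ≤ ‖k‖⁻¹ := by
      have := hlow _ hk
      rwa [norm_inv] at this
    have hkb : ‖k‖ ≤ δ⁻¹ := by
      rcases eq_or_ne k 0 with rfl | hk0
      · simpa using hδinv
      · have hpos : 0 < ‖k‖ := norm_pos_iff.mpr hk0
        have := inv_anti₀ hδ hle
        rwa [inv_inv] at this
    exact NNReal.coe_le_coe.mp hkb
  have hsr : spectralRadius ℂ ((v⁻¹ : Lˣ) : L) = (‖((v⁻¹ : Lˣ) : L)‖₊ : ENNReal) :=
    IsStarNormal.spectralRadius_eq_nnnorm _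
  have h1 : spectralRadius ℂ ((v⁻¹ : Lˣ) : L) ≤ ENNReal.ofNNReal ⟨δ⁻¹, hδinv⟩ := by
    simp only [spectralRadius]
    exact iSup₂_le fun k hk => ENNReal.coe_le_coe.mpr (hbound k hk)
  rw [hsr] at h1
  replace h1 := ENNReal.coe_le_coe.mp h1
  have h2 : ‖((v⁻¹ : Lˣ) : L)‖ ≤ δ⁻¹ := h1
  have hMinv : M⁻¹ = ((u⁻¹ : _ˣ) : Matrix (Fin n) (Fin n) ℂ) := by
    rw [← hu, ← Matrix.coe_units_inv]
  rw [hMinv]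
  exact h2

set_option maxHeartbeats 1600000 in
/-- Entrywise a-posteriori perturbation bound for the resolvent:
for `H` Hermitian with spectrum in compact `𝓔 ⊂ ℝ`, `z ∉ 𝓔`, `δ = dist(z,𝓔)`,
and `‖E‖₂ < δ`, every entry satisfies
`|((H−zI)⁻¹ − (H+E−zI)⁻¹)(i,j)| ≤ ∑_{ĩ,j̃} |(H−zI)⁻¹(i,ĩ)|·|E(ĩ,j̃)|·|(H−zI)⁻¹(j̃,j)|
 + δ⁻²‖E‖₂²/(δ − ‖E‖₂)`. -/
theorem resolvent_perturbation_entry_bound {n : ℕ} (H : Matrix (Fin n) (Fin n) ℂ)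
    (hH : H.IsHermitian) (𝓔 : Set ℝ) (hcompact : IsCompact 𝓔) (hne : 𝓔.Nonempty)
    (hspec : spectrum ℂ H ⊆ Complex.ofReal '' 𝓔)
    (z : ℂ) (hz : z ∉ Complex.ofReal '' 𝓔)
    (E : Matrix (Fin n) (Fin n) ℂ)
    (hE : ‖Matrix.toEuclideanCLM (𝕜 := ℂ) E‖ < Metric.infDist z (Complex.ofReal '' 𝓔)) :
    ∀ i j : Fin n,
      ‖((H - z • 1)⁻¹ - (H + E - z • 1)⁻¹) i j‖ ≤
        (∑ it : Fin n, ∑ jt : Fin n,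
          ‖(H - z • 1)⁻¹ i it‖ * ‖E it jt‖ * ‖(H - z • 1)⁻¹ jt j‖) +
        (Metric.infDist z (Complex.ofReal '' 𝓔))⁻¹ ^ 2 *
          ‖Matrix.toEuclideanCLM (𝕜 := ℂ) E‖ ^ 2 /
          (Metric.infDist z (Complex.ofReal '' 𝓔) -
            ‖Matrix.toEuclideanCLM (𝕜 := ℂ) E‖) := by
  intro i j
  set δ := Metric.infDist z (Complex.ofReal '' 𝓔) with hδdef
  have himg : IsCompact (Complex.ofReal '' 𝓔) := hcompact.image Complex.continuous_ofReal
  have hδpos : 0 < δ :=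
    (himg.isClosed.notMem_iff_infDist_pos (hne.image _)).mp hz
  have hdist : ∀ μ ∈ spectrum ℂ H, δ ≤ ‖μ - z‖ := by
    intro μ hμ
    have h1 : δ ≤ dist z μ := Metric.infDist_le_dist_of_mem (hspec hμ)
    rw [dist_eq_norm] at h1
    rwa [norm_sub_rev] at h1
  obtain ⟨hu, hRnorm⟩ := aux_resolvent_bound H hH z δ hδpos hdist
  set M : Matrix (Fin n) (Fin n) ℂ := H - z • 1 with hM
  have hgoal_eq : H + E - z • 1 = M + E := by rw [hM]; abel
  rw [hgoal_eq]
  set R : Matrix (Fin n) (Fin n) ℂ := M⁻¹ with hRdef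
  set φ := Matrix.toEuclideanCLM (𝕜 := ℂ) (n := Fin n) with hφ
  have hdet : IsUnit M.det := (Matrix.isUnit_iff_isUnit_det M).mp hu
  have hMR : M * R = 1 := Matrix.mul_nonsing_inv M hdet
  have hRM : R * M = 1 := Matrix.nonsing_inv_mul M hdet
  set a := ‖φ R‖ with ha_def
  set e := ‖φ E‖ with he_def
  have ha0 : 0 ≤ a := norm_nonneg _
  have he0 : 0 ≤ e := norm_nonneg _
  have ha : a ≤ δ⁻¹ := hRnorm
  have he : e < δ := hE
  -- invertibility of M + E
  have hsmall : ‖-(φ R * φ E)‖ < 1 := by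
    rw [norm_neg]
    calc ‖φ R * φ E‖ ≤ a * e := norm_mul_le _ _
      _ < 1 := by
          have h5 : a * e ≤ δ⁻¹ * e := mul_le_mul_of_nonneg_right ha he0
          have h6 : δ⁻¹ * e < δ⁻¹ * δ := mul_lt_mul_of_pos_left he (inv_pos.mpr hδpos)
          have h7 : δ⁻¹ * δ = 1 := inv_mul_cancel₀ hδpos.ne'
          linarith
  have hunit1 : IsUnit ((1 : EuclideanSpace ℂ (Fin n) →L[ℂ] EuclideanSpace ℂ (Fin n))
      + φ R * φ E) := by
    have h1 := (Units.oneSub _ hsmall).isUnit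
    rwa [Units.val_oneSub, sub_neg_eq_add] at h1
  have hunitRE : IsUnit (1 + R * E) := by
    have h2 : φ (1 + R * E) = 1 + φ R * φ E := by
      rw [map_add, _root_.map_one, _root_.map_mul]
    rw [← h2] at hunit1
    have h3 := hunit1.map (Matrix.toEuclideanCLM (𝕜 := ℂ) (n := Fin n)).symm
    simpa [hφ] using h3
  have hME : M * (1 + R * E) = M + E := by
    rw [mul_add, mul_one, ← mul_assoc, hMR, one_mul]
  have huME : IsUnit (M + E) := by rw [← hME]; exact hu.mul hunitRE
  have hdetME : IsUnit (M + E).det := (Matrix.isUnit_iff_isUnit_det _).mp huME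
  set R' : Matrix (Fin n) (Fin n) ℂ := (M + E)⁻¹ with hR'def
  have hMER' : (M + E) * R' = 1 := Matrix.mul_nonsing_inv _ hdetME
  -- key identity
  have key : R - R' = R * E * R' := by
    calc R - R' = R * ((M + E) * R') - (R * M) * R' := by rw [hMER', hRM, mul_one, one_mul]
      _ = R * E * R' := by noncomm_ring
  have hR'eq : R' = R - R * E * R' := by rw [← key, sub_sub_cancel]
  -- norm of R'
  set r' := ‖φ R'‖ with hr'norm
  have hr'0 : 0 ≤ r' := norm_nonneg _
  have hr'le : r' ≤ a + a * e * r' := by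
    have h4 : φ R' = φ R - φ R * φ E * φ R' := by
      rw [← _root_.map_mul, ← _root_.map_mul, ← map_sub, ← hR'eq]
    calc r' = ‖φ R - φ R * φ E * φ R'‖ := by rw [hr'norm]; exact congrArg norm h4
      _ ≤ ‖φ R‖ + ‖φ R * φ E * φ R'‖ := norm_sub_le _ _
      _ ≤ a + a * e * r' := by
          refine add_le_add le_rfl ?_
          calc ‖φ R * φ E * φ R'‖ ≤ ‖φ R * φ E‖ * r' := norm_mul_le _ _
            _ ≤ (a * e) * r' := mul_le_mul_of_nonneg_right (norm_mul_le _ _) hr'0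
            _ = a * e * r' := rfl
  have haδ : a * δ ≤ 1 := by
    calc a * δ ≤ δ⁻¹ * δ := mul_le_mul_of_nonneg_right ha hδpos.le
      _ = 1 := inv_mul_cancel₀ hδpos.ne'
  have hr'bound : r' ≤ (δ - e)⁻¹ := by
    rw [← one_div, le_div_iff₀ (by linarith)]
    nlinarith [mul_le_mul_of_nonneg_left hr'le hδpos.le,
      mul_nonneg (mul_nonneg he0 hr'0) (by linarith : (0:ℝ) ≤ 1 - a * δ),
      mul_nonneg he0 hr'0]
  -- final decomposition
  have hD2 : R - R' = R * E * R - R * E * (R * E * R') := by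
    calc R - R' = R * E * R' := key
      _ = R * E * (R - R * E * R') := by rw [← hR'eq]
      _ = R * E * R - R * E * (R * E * R') := by noncomm_ring
  have hsplit : (R - R') i j = (R * E * R) i j - (R * E * (R * E * R')) i j := by
    rw [hD2, Matrix.sub_apply]
  rw [hsplit]
  refine le_trans (norm_sub_le _ _) (add_le_add ?_ ?_)
  · -- entrywise sum bound
    calc ‖(R * E * R) i j‖ = ‖∑ jt, ∑ it, R i it * E it jt * R jt j‖ := by
          simp only [Matrix.mul_apply, Finset.sum_mul]
      _ ≤ ∑ jt, ‖∑ it, R i it * E it jt * R jt j‖ := norm_sum_le _ _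
      _ ≤ ∑ jt, ∑ it, ‖R i it * E it jt * R jt j‖ :=
          Finset.sum_le_sum fun _ _ => norm_sum_le _ _
      _ = ∑ it, ∑ jt, ‖R i it * E it jt * R jt j‖ := Finset.sum_comm
      _ = ∑ it, ∑ jt, ‖R i it‖ * ‖E it jt‖ * ‖R jt j‖ := by
          simp only [norm_mul]
  · -- operator norm bound on the remainder
    calc ‖(R * E * (R * E * R')) i j‖ ≤ ‖φ (R * E * (R * E * R'))‖ := aux_entry_le _ i j
      _ ≤ a * e * (a * e * r') := by
          rw [_root_.map_mul, _root_.map_mul, _root_.map_mul, _root_.map_mul]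
          calc ‖φ R * φ E * (φ R * φ E * φ R')‖
              ≤ ‖φ R * φ E‖ * ‖φ R * φ E * φ R'‖ := norm_mul_le _ _
            _ ≤ (a * e) * (a * e * r') := by
                refine mul_le_mul (norm_mul_le _ _) ?_ (norm_nonneg _)
                  (mul_nonneg ha0 he0)
                calc ‖φ R * φ E * φ R'‖ ≤ ‖φ R * φ E‖ * r' := norm_mul_le _ _
                  _ ≤ (a * e) * r' := mul_le_mul_of_nonneg_right (norm_mul_le _ _) hr'0
      _ ≤ δ⁻¹ ^ 2 * e ^ 2 / (δ - e) := by
          clear_value a e r'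
          rw [div_eq_mul_inv]
          calc a * e * (a * e * r') = a ^ 2 * e ^ 2 * r' := by ring
            _ ≤ δ⁻¹ ^ 2 * e ^ 2 * (δ - e)⁻¹ := by gcongr
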